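/- arXiv:2511.12771 — 5 statements merged into one kernel-verified Lean document; each statement's English description precedes it below -/
import Mathlib

section
/- Let A, B in SL(2,ℝ) and set a = tr(A), b = tr(B), c = tr(AB). If tr(ABA⁻¹B⁻¹) = −2, then a² + b² + c² − abc = 0. -/
open Matrix

/-- Let `A, B ∈ SL(2,ℝ)` and set `a = tr(A)`, `b = tr(B)`, `c = tr(AB)`.
If `tr(ABA⁻¹B⁻¹) = −2`, then `a² + b² + c² − abc = 0`. -/
theorem sl2_markov_equation (A B : Matrix (Fin 2) (Fin 2) ℝ)
    (hA : A.det = 1) (hB : B.det = 1)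
    (a b c : ℝ) (ha : a = A.trace) (hb : b = B.trace) (hc : c = (A * B).trace)
    (hcomm : (A * B * A⁻¹ * B⁻¹).trace = -2) :
    a ^ 2 + b ^ 2 + c ^ 2 - a * b * c = 0 := by
  rw [Matrix.inv_def, Matrix.inv_def, hA, hB] at hcomm
  rw [Matrix.det_fin_two] at hA hB
  simp only [Matrix.trace_fin_two, Matrix.mul_apply, Fin.sum_univ_two,
    Matrix.adjugate_fin_two, Matrix.smul_apply, Matrix.of_apply, Matrix.cons_val',
    Matrix.cons_val_zero, Matrix.cons_val_one, Matrix.head_cons, Matrix.head_fin_const,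
    Matrix.empty_val', Matrix.cons_val_fin_one, smul_eq_mul, Ring.inverse_one,
    one_mul] at hcomm hc
  subst ha hb hc
  simp only [Matrix.trace_fin_two]
  linear_combination hcomm + (2 - (B 0 0 + B 1 1) ^ 2) * hA -
    (A 0 0 ^ 2 + A 1 1 ^ 2 + 2 * A 0 1 * A 1 0) * hB
end

section
/- Every Markov triple can be obtained from the triple (1,1,1) by finitely many applications of the three mutation moves (a,b,c) ↦ (3bc − a, b, c), (a,b,c) ↦ (a, 3ac − b, c), and (a,b,c) ↦ (a, b, 3ab − c). Formally: the set of Markov triples is contained in the reflexive–transitive closure of these three moves applied starting from (1,1,1). -/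
/-- One mutation move on triples of integers: replace one entry `x` of `(a,b,c)` by
`3·(product of the other two) − x`. -/
def markovStep (p q : ℤ × ℤ × ℤ) : Prop :=
  q = (3 * p.2.1 * p.2.2 - p.1, p.2.1, p.2.2) ∨
  q = (p.1, 3 * p.1 * p.2.2 - p.2.1, p.2.2) ∨
  q = (p.1, p.2.1, 3 * p.1 * p.2.1 - p.2.2)

lemma markovStep_swap23 {p q : ℤ × ℤ × ℤ} (h : markovStep p q) :
    markovStep (p.1, p.2.2, p.2.1) (q.1, q.2.2, q.2.1) := by
  obtain ⟨a, b, c⟩ := p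
  rcases h with h | h | h <;> subst h <;> simp [markovStep, Prod.ext_iff] <;> ring_nf <;> tauto

lemma markovStep_swap13 {p q : ℤ × ℤ × ℤ} (h : markovStep p q) :
    markovStep (p.2.2, p.2.1, p.1) (q.2.2, q.2.1, q.1) := by
  obtain ⟨a, b, c⟩ := p
  rcases h with h | h | h <;> subst h <;> simp [markovStep, Prod.ext_iff] <;> ring_nf <;> tauto

lemma markov_core (a b c : ℤ) (ha : 0 < a) (hb : 0 < b) (hc : 0 < c)
    (hab : a ≤ b) (hbc : b ≤ c)
    (h : a ^ 2 + b ^ 2 + c ^ 2 = 3 * a * b * c)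
    (hne : ¬(a = 1 ∧ b = 1 ∧ c = 1)) :
    0 < 3 * a * b - c ∧ 3 * a * b - c < c ∧
      a ^ 2 + b ^ 2 + (3 * a * b - c) ^ 2 = 3 * a * b * (3 * a * b - c) := by
  have hcc : c * (3 * a * b - c) = a ^ 2 + b ^ 2 := by linear_combination -h
  have hpos : 0 < 3 * a * b - c := by
    by_contra h2
    push_neg at h2
    nlinarith [hcc, sq_nonneg a, sq_nonneg b, mul_pos ha hb]
  refine ⟨hpos, ?_, by linear_combination h⟩
  by_contra h2
  push_neg at h2
  have hfb : 0 ≤ (c - b) * ((3 * a * b - c) - b) := by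
    apply mul_nonneg <;> linarith
  have hab2 : 3 * a * b ^ 2 ≤ a ^ 2 + 2 * b ^ 2 := by nlinarith [hfb, hcc]
  have ha1 : 0 ≤ (a - 1) * b ^ 2 := mul_nonneg (by linarith) (sq_nonneg b)
  have hsq : b ^ 2 ≤ a ^ 2 := by nlinarith
  have hba : b ≤ a := by nlinarith [sq_nonneg (a - b)]
  have hab' : a = b := le_antisymm hab hba
  subst hab'
  have haa : a = 1 := by nlinarith
  subst haa
  have hc1 : c = 1 := by omega
  exact hne ⟨rfl, rfl, hc1⟩

lemma markov_reach : ∀ n : ℕ, ∀ a b c : ℤ, 0 < a → 0 < b → 0 < c → a + b + c ≤ (n : ℤ) →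
    a ^ 2 + b ^ 2 + c ^ 2 = 3 * a * b * c →
    Relation.ReflTransGen markovStep (1, 1, 1) (a, b, c) := by
  intro n
  induction n with
  | zero => intro a b c ha hb hc hsum _; exfalso; push_cast at hsum; omega
  | succ n ih =>
    intro a b c ha hb hc hsum h
    by_cases hne : a = 1 ∧ b = 1 ∧ c = 1
    · obtain ⟨rfl, rfl, rfl⟩ := hne; exact Relation.ReflTransGen.refl
    · -- find the maximum coordinate
      rcases le_total a b with hab | hab
      · rcases le_total b c with hbc | hbc
        · -- c is max
          obtain ⟨h1, h2, h3⟩ := markov_core a b c ha hb hc hab hbc h hne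
          have path : Relation.ReflTransGen markovStep (1, 1, 1) (a, b, 3 * a * b - c) :=
            ih a b (3 * a * b - c) ha hb h1 (by push_cast at hsum ⊢; omega) h3
          exact path.tail (Or.inr (Or.inr (by simp [Prod.ext_iff]; try ring)))
        · rcases le_total a c with hac | hac
          · -- b is max : work with (a, c, b)
            have hne' : ¬(a = 1 ∧ c = 1 ∧ b = 1) := by tauto
            obtain ⟨h1, h2, h3⟩ := markov_core a c b ha hc hb hac hbc
              (by linear_combination h) hne'
            have path : Relation.ReflTransGen markovStep (1, 1, 1) (a, c, 3 * a * c - b) :=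
              ih a c (3 * a * c - b) ha hc h1 (by push_cast at hsum ⊢; omega) h3
            have path2 : Relation.ReflTransGen markovStep (1, 1, 1) (a, c, b) :=
              path.tail (Or.inr (Or.inr (by simp [Prod.ext_iff]; try ring)))
            have := path2.lift (fun p => (p.1, p.2.2, p.2.1)) (fun p q => markovStep_swap23)
            simpa using this
          · -- b is max and c ≤ a ≤ b : work with (c, a, b)
            have hne' : ¬(c = 1 ∧ a = 1 ∧ b = 1) := by tauto
            obtain ⟨h1, h2, h3⟩ := markov_core c a b hc ha hb hac hab
              (by linear_combination h) hne'
            have path : Relation.ReflTransGen markovStep (1, 1, 1) (c, a, 3 * c * a - b) :=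
              ih c a (3 * c * a - b) hc ha h1 (by push_cast at hsum ⊢; omega) h3
            have path2 : Relation.ReflTransGen markovStep (1, 1, 1) (c, a, b) :=
              path.tail (Or.inr (Or.inr (by simp [Prod.ext_iff]; try ring)))
            -- (c, a, b) --swap13--> (b, a, c) --swap23 won't help; need (a,b,c)
            have step1 := path2.lift (fun p => (p.2.1, p.2.2, p.1)) (fun p q hpq => by
              have h23 := markovStep_swap23 hpq
              have h13 := markovStep_swap13 h23
              simpa using h13)
            simpa using step1
      · rcases le_total a c with hac | hac
        · -- c is max (b ≤ a ≤ c): work with (b, a, c)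
          have hne' : ¬(b = 1 ∧ a = 1 ∧ c = 1) := by tauto
          obtain ⟨h1, h2, h3⟩ := markov_core b a c hb ha hc hab hac
            (by linear_combination h) hne'
          have path : Relation.ReflTransGen markovStep (1, 1, 1) (b, a, 3 * b * a - c) :=
            ih b a (3 * b * a - c) hb ha h1 (by push_cast at hsum ⊢; omega) h3
          have path2 : Relation.ReflTransGen markovStep (1, 1, 1) (b, a, c) :=
            path.tail (Or.inr (Or.inr (by simp [Prod.ext_iff]; try ring)))
          have step1 := path2.lift (fun p => (p.2.1, p.1, p.2.2)) (fun p q hpq => by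
            have h13 := markovStep_swap13 hpq
            have h23 := markovStep_swap23 h13
            have h13' := markovStep_swap13 h23
            simpa using h13')
          simpa using step1
        · -- a is max : work with (c, b, a) if b ≤ c, else (b, c, a)
          rcases le_total b c with hbc | hbc
          · have hne' : ¬(b = 1 ∧ c = 1 ∧ a = 1) := by tauto
            obtain ⟨h1, h2, h3⟩ := markov_core b c a hb hc ha hbc hac
              (by linear_combination h) hne'
            have path : Relation.ReflTransGen markovStep (1, 1, 1) (b, c, 3 * b * c - a) :=
              ih b c (3 * b * c - a) hb hc h1 (by push_cast at hsum ⊢; omega) h3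
            have path2 : Relation.ReflTransGen markovStep (1, 1, 1) (b, c, a) :=
              path.tail (Or.inr (Or.inr (by simp [Prod.ext_iff]; try ring)))
            have step1 := path2.lift (fun p => (p.2.2, p.1, p.2.1)) (fun p q hpq => by
              have h13 := markovStep_swap13 hpq
              have h23 := markovStep_swap23 h13
              simpa using h23)
            simpa using step1
          · have hne' : ¬(c = 1 ∧ b = 1 ∧ a = 1) := by tauto
            obtain ⟨h1, h2, h3⟩ := markov_core c b a hc hb ha hbc hab
              (by linear_combination h) hne'
            have path : Relation.ReflTransGen markovStep (1, 1, 1) (c, b, 3 * c * b - a) :=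
              ih c b (3 * c * b - a) hc hb h1 (by push_cast at hsum ⊢; omega) h3
            have path2 : Relation.ReflTransGen markovStep (1, 1, 1) (c, b, a) :=
              path.tail (Or.inr (Or.inr (by simp [Prod.ext_iff]; try ring)))
            have step1 := path2.lift (fun p => (p.2.2, p.2.1, p.1)) (fun p q hpq =>
              markovStep_swap13 hpq)
            simpa using step1

/-- Every Markov triple (positive integers with `a² + b² + c² = 3abc`) can be obtained
from `(1,1,1)` by finitely many applications of the three mutation moves; i.e. it lies in
the reflexive–transitive closure of the moves starting from `(1,1,1)`. -/
theorem markov_triples_from_trivial (a b c : ℤ) (ha : 0 < a) (hb : 0 < b) (hc : 0 < c)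
    (h : a ^ 2 + b ^ 2 + c ^ 2 = 3 * a * b * c) :
    Relation.ReflTransGen markovStep (1, 1, 1) (a, b, c) := by
  exact markov_reach (a + b + c).toNat a b c ha hb hc (Int.self_le_toNat _) h
end

section
/- Let (𝒜,σ) be a unital ring with anti-involution. For all M, N ∈ Mat₂(𝒜), the non-commutative classical trace identity holds: tr(Adj(M)·N) + tr(σ(M)·N) − σ(tr(M))·tr(N) = 0, where Adj([[A,B],[C,D]]) = [[σ(D),−σ(B)],[−σ(C),σ(A)]] and σ(M) denotes entrywise application of σ. -/
open Matrix

/-- The adjoint matrix `Adj([[A,B],[C,D]]) = [[σ(D),−σ(B)],[−σ(C),σ(A)]]` of a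
`2 × 2` matrix over a ring with anti-involution `σ = star`. -/
def adjMat {𝒜 : Type*} [Ring 𝒜] [StarRing 𝒜] (M : Matrix (Fin 2) (Fin 2) 𝒜) :
    Matrix (Fin 2) (Fin 2) 𝒜 :=
  !![star (M 1 1), -star (M 0 1); -star (M 1 0), star (M 0 0)]

/-- Let `(𝒜,σ)` be a unital ring with anti-involution.  For all `M, N ∈ Mat₂(𝒜)`,
the non-commutative classical trace identity holds:
`tr(Adj(M)·N) + tr(σ(M)·N) − σ(tr(M))·tr(N) = 0`, where `σ(M)` denotes entrywise
application of `σ` and `tr(M)` is the sum of the diagonal entries. -/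
theorem noncommutative_trace_identity {𝒜 : Type*} [Ring 𝒜] [StarRing 𝒜]
    (M N : Matrix (Fin 2) (Fin 2) 𝒜) :
    (adjMat M * N).trace + ((M.map star) * N).trace - star M.trace * N.trace = 0 := by
  simp [adjMat, Matrix.trace, Matrix.diag, Matrix.mul_apply, Fin.sum_univ_two, Matrix.map_apply, star_add, add_mul, mul_add]
  abel
end

section
/- Let R be a unital ring and M = [[A,B],[C,D]] ∈ Mat₂(R). Then M is a Manin matrix with AD − CB = 1 if and only if M satisfies the Cayley–Hamilton identity M² − tr(M)·M + I₂ = 0, where tr(M) = A + D acts by left scalar multiplication. -/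
open Matrix

/-- Let `R` be a unital ring and `M = [[A,B],[C,D]] ∈ Mat₂(R)`.  Then `M` is a Manin
matrix (`AC = CA`, `BD = DB`, `AD − CB = DA − BC`) with `AD − CB = 1` if and only if `M`
satisfies the Cayley–Hamilton identity `M² − tr(M)·M + I₂ = 0`, where `tr(M) = A + D`
acts by left scalar multiplication. -/
theorem manin_det_one_iff_cayley_hamilton {R : Type*} [Ring R] (A B C D : R) :
    (A * C = C * A ∧ B * D = D * B ∧ A * D - C * B = D * A - B * C ∧
        A * D - C * B = 1) ↔
      (!![A, B; C, D] : Matrix (Fin 2) (Fin 2) R) * !![A, B; C, D]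
          - ((!![A, B; C, D] : Matrix (Fin 2) (Fin 2) R).trace) • !![A, B; C, D]
          + 1 = 0 := by
  rw [← Matrix.ext_iff]
  simp only [Fin.forall_fin_two, Matrix.add_apply, Matrix.sub_apply, Matrix.mul_apply,
    Matrix.smul_apply, Matrix.trace_fin_two_of, Matrix.one_apply, Matrix.zero_apply,
    Fin.sum_univ_two, Matrix.cons_val', Matrix.cons_val_zero, Matrix.cons_val_one,
    Matrix.head_cons, Matrix.head_fin_const, Matrix.empty_val', Matrix.cons_val_fin_one,
    smul_eq_mul]
  norm_num
  constructor
  · rintro ⟨h1, h2, h3, h4⟩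
    refine ⟨⟨?_, ?_⟩, ?_, ?_⟩
    · linear_combination (norm := noncomm_ring) h3 - h4
    · linear_combination (norm := noncomm_ring) h2
    · linear_combination (norm := noncomm_ring) -h1
    · linear_combination (norm := noncomm_ring) -h4
  · rintro ⟨⟨h1, h2⟩, h3, h4⟩
    refine ⟨?_, ?_, ?_, ?_⟩
    · linear_combination (norm := noncomm_ring) -h3
    · linear_combination (norm := noncomm_ring) h2
    · linear_combination (norm := noncomm_ring) h1 - h4
    · linear_combination (norm := noncomm_ring) -h4
end

section
/- Let R be a unital ring in which 2 is not a zero divisor on R (i.e. 2x = 0 implies x = 0), and let M = [[A,B],[C,D]] ∈ Mat₂(R). If both M and its transpose Mᵀ = [[A,C],[B,D]] are Manin matrices, then the four entries A, B, C, D pairwise commute. -/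
open Matrix

/-- Let `R` be a unital ring in which `2` is not a zero divisor (i.e. `2x = 0` implies
`x = 0`), and let `M = [[A,B],[C,D]] ∈ Mat₂(R)`.  If both `M` and its transpose
`Mᵀ = [[A,C],[B,D]]` are Manin matrices, then the entries `A, B, C, D` pairwise
commute. -/
theorem manin_and_transpose_manin_commute {R : Type*} [Ring R]
    (h2 : ∀ x : R, 2 * x = 0 → x = 0) (A B C D : R)
    (hM : A * C = C * A ∧ B * D = D * B ∧ A * D - C * B = D * A - B * C)
    (hMT : A * B = B * A ∧ C * D = D * C ∧ A * D - B * C = D * A - C * B) :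
    A * B = B * A ∧ A * C = C * A ∧ A * D = D * A ∧
      B * C = C * B ∧ B * D = D * B ∧ C * D = D * C := by
  obtain ⟨hAC, hBD, h1⟩ := hM
  obtain ⟨hAB, hCD, h2'⟩ := hMT
  have key : 2 * (A * D - D * A) = 0 := by
    have : 2 * (A * D - D * A) =
        ((A * D - C * B) - (D * A - B * C)) + ((A * D - B * C) - (D * A - C * B)) := by
      noncomm_ring
    rw [this, h1, h2', sub_self, sub_self, add_zero]
  have hAD : A * D = D * A := sub_eq_zero.mp (h2 _ key)
  have hBC : B * C = C * B := by
    have h3 : A * D - B * C = A * D - C * B := by rw [h2', hAD]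
    exact sub_right_injective h3
  exact ⟨hAB, hAC, hAD, hBC, hBD, hCD⟩
end
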